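/- (Adjacent-pair domination, final step in the proof of Theorem 1) The minimum of the pairwise large deviations rates over all ordered pairs of types equals the minimum over adjacent pairs: min_{0 ≤ i < j ≤ M−1} inf_{a ∈ ℝ} { g(θ_j) I(a|θ_j) + g(θ_i) I(a|θ_i) } = min_{0 ≤ i ≤ M−2} inf_{a ∈ ℝ} { g(θ_{i+1}) I(a|θ_{i+1}) + g(θ_i) I(a|θ_i) }, with all infima taken in [0,∞]. -/

import Mathlib

open MeasureTheory ProbabilityTheory Filter Finset
open scoped ENNReal

/-- Log moment generating function of a single score for a seller of type `θ`:
`Λ(z|θ) = log Σ_{y ∈ Y} ρ(θ,y) exp(z φ(y))`. -/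
noncomputable def lmgf {Y Θ : Type} [Fintype Y] (ρ : Θ → Y → ℝ) (φ : Y → ℝ)
    (θ : Θ) (z : ℝ) : ℝ :=
  Real.log (∑ y, ρ θ y * Real.exp (z * φ y))

/-- Legendre transform `I(a|θ) = sup_z (z a − Λ(z|θ))`, valued in `[0,∞]`. -/
noncomputable def rateI {Y Θ : Type} [Fintype Y] (ρ : Θ → Y → ℝ) (φ : Y → ℝ)
    (θ : Θ) (a : ℝ) : ℝ≥0∞ :=
  ⨆ z : ℝ, ENNReal.ofReal (z * a - lmgf ρ φ θ z)

/-- Pairwise large deviations rate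
`inf_{a ∈ ℝ} { g(θ1) I(a|θ1) + g(θ2) I(a|θ2) }`, valued in `[0,∞]`. -/
noncomputable def pairRate {Y Θ : Type} [Fintype Y] (ρ : Θ → Y → ℝ) (φ : Y → ℝ)
    (g : Θ → ℝ) (θ1 θ2 : Θ) : ℝ≥0∞ :=
  ⨅ a : ℝ, ENNReal.ofReal (g θ1) * rateI ρ φ θ1 a + ENNReal.ofReal (g θ2) * rateI ρ φ θ2 a

/-- Number of matches up to time `k`: `n_k(θ) = ⌊k g(θ)⌋`. -/
noncomputable def nMatch {Θ : Type} (g : Θ → ℝ) (k : ℕ) (θ : Θ) : ℕ := ⌊(k : ℝ) * g θ⌋₊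

/-- Aggregate score at time `k`:
`x_k(θ) = (1/n_k(θ)) Σ_{ℓ=1}^{n_k(θ)} φ(y_ℓ(θ))`. -/
noncomputable def aggScore {Y Θ Ω : Type} (φ : Y → ℝ) (g : Θ → ℝ)
    (ysamp : Θ → ℕ → Ω → Y) (k : ℕ) (θ : Θ) (ω : Ω) : ℝ :=
  (∑ ℓ ∈ Finset.Icc 1 (nMatch g k θ), φ (ysamp θ ℓ ω)) / (nMatch g k θ : ℝ)

/-- `P_k(θ1,θ2) = P(x_k(θ1) > x_k(θ2)) − P(x_k(θ1) < x_k(θ2))`. -/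
noncomputable def Pk {Y Θ Ω : Type} [MeasurableSpace Ω] (μ : Measure Ω)
    (φ : Y → ℝ) (g : Θ → ℝ) (ysamp : Θ → ℕ → Ω → Y) (k : ℕ) (θ1 θ2 : Θ) : ℝ :=
  (μ {ω | aggScore φ g ysamp k θ2 ω < aggScore φ g ysamp k θ1 ω}).toReal -
    (μ {ω | aggScore φ g ysamp k θ1 ω < aggScore φ g ysamp k θ2 ω}).toReal

/-! ### Auxiliary lemmas -/

/-- Abel summation identity over `range n`. -/
lemma abel_identity (n : ℕ) (P F : ℕ → ℝ) :
    ∑ m ∈ range n, P m * F m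
      = F 0 * ∑ m ∈ range n, P m
        + ∑ k ∈ Ico 1 n, (F k - F (k - 1)) * ∑ m ∈ Ico k n, P m := by
  have tel : ∀ m, F m = F 0 + ∑ k ∈ Ico 1 (m + 1), (F k - F (k - 1)) := by
    intro m
    rw [Finset.sum_Ico_eq_sum_range]
    simp only [Nat.add_sub_cancel]
    have h1 : ∀ i ∈ range m, F (1 + i) - F (1 + i - 1) = F (i + 1) - F i := by
      intro i _
      rw [Nat.add_comm 1 i, Nat.add_sub_cancel]
    rw [Finset.sum_congr rfl h1, Finset.sum_range_sub (fun i => F i)]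
    ring
  calc ∑ m ∈ range n, P m * F m
      = ∑ m ∈ range n, (P m * F 0 + ∑ k ∈ Ico 1 (m + 1), P m * (F k - F (k - 1))) := by
        refine Finset.sum_congr rfl fun m _ => ?_
        rw [← Finset.mul_sum, ← mul_add, ← tel m]
    _ = ∑ m ∈ range n, P m * F 0
        + ∑ m ∈ range n, ∑ k ∈ Ico 1 (m + 1), P m * (F k - F (k - 1)) :=
        Finset.sum_add_distrib
    _ = F 0 * ∑ m ∈ range n, P m
        + ∑ k ∈ Ico 1 n, ∑ m ∈ Ico k n, P m * (F k - F (k - 1)) := by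
        rw [← Finset.sum_mul, mul_comm]
        congr 1
        refine Finset.sum_comm' fun m k => ?_
        simp only [mem_range, mem_Ico]
        omega
    _ = F 0 * ∑ m ∈ range n, P m
        + ∑ k ∈ Ico 1 n, (F k - F (k - 1)) * ∑ m ∈ Ico k n, P m := by
        congr 1
        refine Finset.sum_congr rfl fun k _ => ?_
        rw [← Finset.sum_mul, mul_comm]

/-- Comparison of expectations of a monotone function under first-order
stochastic dominance, on a finite linearly ordered type. -/
lemma sum_mul_mono_le {Y : Type} [Fintype Y] [Nonempty Y] [LinearOrder Y]
    (p q f : Y → ℝ) (hf : Monotone f)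
    (htot : ∑ y, p y = ∑ y, q y)
    (hupper : ∀ y : Y, ¬ IsMin y →
      ∑ y' ∈ Finset.univ.filter (fun y' => y ≤ y'), p y'
        ≤ ∑ y' ∈ Finset.univ.filter (fun y' => y ≤ y'), q y') :
    ∑ y, p y * f y ≤ ∑ y, q y * f y := by
  classical
  set n := Fintype.card Y with hn
  have hn0 : 0 < n := Fintype.card_pos
  set e : Fin n ≃o Y := monoEquivOfFin Y rfl with he
  set P : ℕ → ℝ := fun m => if h : m < n then p (e ⟨m, h⟩) else 0 with hP
  set Q : ℕ → ℝ := fun m => if h : m < n then q (e ⟨m, h⟩) else 0 with hQ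
  set F : ℕ → ℝ := fun m => if h : m < n then f (e ⟨m, h⟩) else 0 with hF
  have transfer : ∀ r : Y → ℝ,
      ∑ m ∈ range n, (if h : m < n then r (e ⟨m, h⟩) else 0) = ∑ y, r y := by
    intro r
    rw [← Fin.sum_univ_eq_sum_range (fun m => if h : m < n then r (e ⟨m, h⟩) else 0) n]
    rw [← Equiv.sum_comp e.toEquiv r]
    refine Finset.sum_congr rfl fun i _ => ?_
    simp [i.isLt]
  have transferW : ∀ r : Y → ℝ, ∀ RR : ℕ → ℝ,
      (RR = fun m => if h : m < n then r (e ⟨m, h⟩) else 0) →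
      ∑ m ∈ range n, RR m * F m = ∑ y, r y * f y := by
    intro r RR hRR
    rw [← transfer (fun y => r y * f y)]
    refine Finset.sum_congr rfl fun m hm => ?_
    have hmn : m < n := mem_range.1 hm
    simp [hRR, hF, hmn]
  have transferU : ∀ r : Y → ℝ, ∀ RR : ℕ → ℝ,
      (RR = fun m => if h : m < n then r (e ⟨m, h⟩) else 0) →
      ∀ k (hk : k < n),
      ∑ m ∈ Ico k n, RR m
        = ∑ y' ∈ Finset.univ.filter (fun y' => e ⟨k, hk⟩ ≤ y'), r y' := by
    intro r RR hRR k hk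
    have step : ∀ i : Fin n, (if e ⟨k, hk⟩ ≤ e i then r (e i) else 0)
        = (fun m => if k ≤ m then RR m else 0) i.val := by
      intro i
      have hiff : e ⟨k, hk⟩ ≤ e i ↔ k ≤ i.val := by
        rw [e.le_iff_le]; exact Iff.rfl
      simp only [hiff, hRR, i.isLt, dif_pos, Fin.eta]
    calc ∑ m ∈ Ico k n, RR m
        = ∑ m ∈ (range n).filter (fun m => k ≤ m), RR m := by
          congr 1
          ext m
          simp only [mem_filter, mem_range, mem_Ico]
          omega
      _ = ∑ m ∈ range n, (if k ≤ m then RR m else 0) := Finset.sum_filter _ _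
      _ = ∑ i : Fin n, (if k ≤ (i : ℕ) then RR (i : ℕ) else 0) :=
          (Fin.sum_univ_eq_sum_range (fun m => if k ≤ m then RR m else 0) n).symm
      _ = ∑ i : Fin n, (if e ⟨k, hk⟩ ≤ e i then r (e i) else 0) :=
          Finset.sum_congr rfl (fun i _ => (step i).symm)
      _ = ∑ y, (if e ⟨k, hk⟩ ≤ y then r y else 0) :=
          Equiv.sum_comp e.toEquiv (fun y => if e ⟨k, hk⟩ ≤ y then r y else 0)
      _ = ∑ y' ∈ Finset.univ.filter (fun y' => e ⟨k, hk⟩ ≤ y'), r y' :=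
          (Finset.sum_filter _ _).symm
  have habelP := abel_identity n P F
  have habelQ := abel_identity n Q F
  have htot' : ∑ m ∈ range n, P m = ∑ m ∈ range n, Q m := by
    rw [hP, hQ, transfer p, transfer q]; exact htot
  have hWP := transferW p P hP
  have hWQ := transferW q Q hQ
  rw [← hWP, ← hWQ, habelP, habelQ, htot']
  refine add_le_add le_rfl (Finset.sum_le_sum fun k hk => ?_)
  have hk1 : 1 ≤ k := (mem_Ico.1 hk).1
  have hkn : k < n := (mem_Ico.1 hk).2
  have hk1n : k - 1 < n := lt_of_le_of_lt (Nat.sub_le _ _) hkn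
  have hFk : 0 ≤ F k - F (k - 1) := by
    have hle : e ⟨k - 1, hk1n⟩ ≤ e ⟨k, hkn⟩ := by
      rw [e.le_iff_le]; exact Nat.sub_le k 1
    have := hf hle
    simp only [hF, hkn, hk1n, dif_pos]
    linarith
  have hmin : ¬ IsMin (e ⟨k, hkn⟩) := by
    intro hIsMin
    have h0 : e ⟨0, hn0⟩ < e ⟨k, hkn⟩ := by
      rw [e.lt_iff_lt]; exact hk1
    exact absurd (hIsMin h0.le) h0.not_ge
  have hUP := hupper (e ⟨k, hkn⟩) hmin
  rw [← transferU p P hP k hkn, ← transferU q Q hQ k hkn] at hUP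
  exact mul_le_mul_of_nonneg_left hUP hFk

/-- Antitone version of `sum_mul_mono_le`. -/
lemma sum_mul_anti_le {Y : Type} [Fintype Y] [Nonempty Y] [LinearOrder Y]
    (p q f : Y → ℝ) (hf : Antitone f)
    (htot : ∑ y, p y = ∑ y, q y)
    (hupper : ∀ y : Y, ¬ IsMin y →
      ∑ y' ∈ Finset.univ.filter (fun y' => y ≤ y'), p y'
        ≤ ∑ y' ∈ Finset.univ.filter (fun y' => y ≤ y'), q y') :
    ∑ y, q y * f y ≤ ∑ y, p y * f y := by
  have h := sum_mul_mono_le p q (fun y => -f y)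
    (fun a b hab => neg_le_neg (hf hab)) htot hupper
  simp only [mul_neg, Finset.sum_neg_distrib] at h
  linarith

section RateAux

variable {Y Θ : Type} [Fintype Y] (ρ : Θ → Y → ℝ) (φ : Y → ℝ) (θ : Θ)

lemma sum_exp_pos (hρ0 : ∀ y, 0 ≤ ρ θ y) (hρ1 : ∑ y, ρ θ y = 1) (z : ℝ) :
    0 < ∑ y, ρ θ y * Real.exp (z * φ y) := by
  have h0 : ∃ y ∈ Finset.univ, (0 : ℝ) < ρ θ y := by
    by_contra h
    push_neg at h
    have : ∑ y, ρ θ y ≤ 0 := Finset.sum_nonpos fun y hy => h y hy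
    rw [hρ1] at this; linarith
  obtain ⟨y0, hy0, hy0'⟩ := h0
  refine Finset.sum_pos' (fun y _ => mul_nonneg (hρ0 y) (Real.exp_pos _).le) ⟨y0, hy0, ?_⟩
  exact mul_pos hy0' (Real.exp_pos _)

lemma lmgf_ge (hρ0 : ∀ y, 0 ≤ ρ θ y) (hρ1 : ∑ y, ρ θ y = 1) (z : ℝ) :
    z * (∑ y, ρ θ y * φ y) ≤ lmgf ρ φ θ z := by
  have hj := convexOn_exp.map_sum_le (t := Finset.univ) (w := ρ θ) (p := fun y => z * φ y)
      (fun y _ => hρ0 y) hρ1 (fun y _ => Set.mem_univ _)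
  simp only [smul_eq_mul] at hj
  have h1 : ∑ y, ρ θ y * (z * φ y) = z * ∑ y, ρ θ y * φ y := by
    rw [Finset.mul_sum]; exact Finset.sum_congr rfl fun y _ => by ring
  rw [h1] at hj
  calc z * ∑ y, ρ θ y * φ y
      = Real.log (Real.exp (z * ∑ y, ρ θ y * φ y)) := (Real.log_exp _).symm
    _ ≤ lmgf ρ φ θ z := Real.log_le_log (Real.exp_pos _) hj

lemma rateI_mean (hρ0 : ∀ y, 0 ≤ ρ θ y) (hρ1 : ∑ y, ρ θ y = 1) :
    rateI ρ φ θ (∑ y, ρ θ y * φ y) = 0 := by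
  rw [rateI]
  refine ENNReal.iSup_eq_zero.2 fun z => ?_
  exact ENNReal.ofReal_eq_zero.2 (sub_nonpos.2 (lmgf_ge ρ φ θ hρ0 hρ1 z))

lemma rateI_right_mono (hρ0 : ∀ y, 0 ≤ ρ θ y) (hρ1 : ∑ y, ρ θ y = 1) {a' a : ℝ}
    (h1 : ∑ y, ρ θ y * φ y ≤ a') (h2 : a' ≤ a) :
    rateI ρ φ θ a' ≤ rateI ρ φ θ a := by
  rw [rateI, rateI]
  refine iSup_le fun z => ?_
  rcases le_or_gt 0 z with hz | hz
  · refine le_iSup_of_le z (ENNReal.ofReal_le_ofReal ?_)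
    have := mul_le_mul_of_nonneg_left h2 hz
    linarith
  · have hle : z * a' - lmgf ρ φ θ z ≤ 0 := by
      have h3 := lmgf_ge ρ φ θ hρ0 hρ1 z
      have h4 : z * a' ≤ z * (∑ y, ρ θ y * φ y) := mul_le_mul_of_nonpos_left h1 hz.le
      linarith
    rw [ENNReal.ofReal_eq_zero.2 hle]
    exact zero_le

end RateAux

section TypeAux

variable {Y : Type} [Fintype Y] [Nonempty Y] [LinearOrder Y] {M : ℕ}
  (ρ : Fin M → Y → ℝ) (φ : Y → ℝ)
  (hρ0 : ∀ θ y, 0 ≤ ρ θ y) (hρ1 : ∀ θ, ∑ y, ρ θ y = 1)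
  (hR : ∀ y : Y, ¬ IsMin y →
    StrictMono (fun θ => ∑ y' ∈ Finset.univ.filter (fun y' => y ≤ y'), ρ θ y'))
  (hφ : StrictMono φ)

include hρ1 hR hφ in
lemma lmgf_anti_type (hρ0' : ∀ θ y, 0 ≤ ρ θ y) {i j : Fin M} (hij : i ≤ j) {z : ℝ} (hz : z ≤ 0) :
    lmgf ρ φ j z ≤ lmgf ρ φ i z := by
  have hanti : Antitone fun y => Real.exp (z * φ y) := fun a b hab =>
    Real.exp_le_exp.2 (mul_le_mul_of_nonpos_left (hφ.monotone hab) hz)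
  have hdom := sum_mul_anti_le (ρ i) (ρ j) (fun y => Real.exp (z * φ y)) hanti
    ((hρ1 i).trans (hρ1 j).symm) (fun y hy => (hR y hy).monotone hij)
  rw [lmgf, lmgf]
  exact Real.log_le_log (sum_exp_pos ρ φ j (hρ0' j) (hρ1 j) z) hdom

include hρ1 hR hφ in
lemma mean_mono_type {i j : Fin M} (hij : i ≤ j) :
    ∑ y, ρ i y * φ y ≤ ∑ y, ρ j y * φ y :=
  sum_mul_mono_le (ρ i) (ρ j) φ hφ.monotone ((hρ1 i).trans (hρ1 j).symm)
    (fun y hy => (hR y hy).monotone hij)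

include hρ0 hρ1 hR hφ in
lemma rateI_left_le {i j : Fin M} (hij : i ≤ j) {a : ℝ} (ha : a ≤ ∑ y, ρ i y * φ y) :
    rateI ρ φ i a ≤ rateI ρ φ j a := by
  rw [rateI, rateI]
  refine iSup_le fun z => ?_
  rcases le_or_gt z 0 with hz | hz
  · refine le_iSup_of_le z (ENNReal.ofReal_le_ofReal ?_)
    have := lmgf_anti_type ρ φ hρ1 hR hφ hρ0 hij hz
    linarith
  · have hle : z * a - lmgf ρ φ i z ≤ 0 := by
      have h3 := lmgf_ge ρ φ i (hρ0 i) (hρ1 i) z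
      have h4 : z * a ≤ z * (∑ y, ρ i y * φ y) := mul_le_mul_of_nonneg_left ha hz.le
      linarith
    rw [ENNReal.ofReal_eq_zero.2 hle]
    exact zero_le

end TypeAux

/-- **Adjacent-pair domination** (final step in the proof of Theorem 1). The
minimum of the pairwise large deviations rates over all ordered pairs of types
equals the minimum over adjacent pairs:
`min_{0 ≤ i < j ≤ M−1} inf_a { g(θ_j) I(a|θ_j) + g(θ_i) I(a|θ_i) }
  = min_{0 ≤ i ≤ M−2} inf_a { g(θ_{i+1}) I(a|θ_{i+1}) + g(θ_i) I(a|θ_i) }`,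
with all infima taken in `[0,∞]`. -/
theorem adjacent_pair_domination
    {Y : Type} [Fintype Y] [Nonempty Y] [LinearOrder Y]
    {M : ℕ} (hM : 2 ≤ M)
    (ρ : Fin M → Y → ℝ) (φ : Y → ℝ) (g : Fin M → ℝ)
    -- ρ(θ,·) is a probability mass function on Y
    (hρ0 : ∀ θ y, 0 ≤ ρ θ y) (hρ1 : ∀ θ, ∑ y, ρ θ y = 1)
    -- the upper cumulative mass function R(·,y) is strictly increasing in θ for
    -- every non-minimal y
    (hR : ∀ y : Y, ¬ IsMin y →
      StrictMono (fun θ => ∑ y' ∈ Finset.univ.filter (fun y' => y ≤ y'), ρ θ y'))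
    -- φ is a strictly increasing score function with values in [0,1]
    (hφ : StrictMono φ) (hφ01 : ∀ y, φ y ∈ Set.Icc (0 : ℝ) 1)
    -- g is a positive nondecreasing match function
    (hg : ∀ θ, 0 < g θ) (hgmono : Monotone g) :
    (⨅ (i : Fin M) (j : Fin M) (_ : i < j), pairRate ρ φ g j i) =
      ⨅ (i : ℕ) (h : i + 1 < M),
        pairRate ρ φ g ⟨i + 1, h⟩ ⟨i, Nat.lt_of_succ_lt h⟩ := by
  have key : ∀ (i j : Fin M) (hij : i < j),
      pairRate ρ φ g
          ⟨(i : ℕ) + 1, lt_of_le_of_lt (Nat.succ_le_of_lt (Fin.lt_def.1 hij)) j.isLt⟩ i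
        ≤ pairRate ρ φ g j i := by
    intro i j hij
    set i1 : Fin M :=
      ⟨(i : ℕ) + 1, lt_of_le_of_lt (Nat.succ_le_of_lt (Fin.lt_def.1 hij)) j.isLt⟩ with hi1
    have hii1 : i ≤ i1 := Fin.le_def.2 (Nat.le_succ _)
    have hi1j : i1 ≤ j := Fin.le_def.2 (Nat.succ_le_of_lt (Fin.lt_def.1 hij))
    simp only [pairRate]
    refine le_iInf fun a => ?_
    rcases le_or_gt a (∑ y, ρ i1 y * φ y) with ha | ha
    · refine le_trans (iInf_le _ a) (add_le_add (mul_le_mul' ?_ ?_) le_rfl)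
      · exact ENNReal.ofReal_le_ofReal (hgmono hi1j)
      · exact rateI_left_le ρ φ hρ0 hρ1 hR hφ hi1j ha
    · refine le_trans (iInf_le _ (∑ y, ρ i1 y * φ y)) ?_
      rw [rateI_mean ρ φ i1 (hρ0 i1) (hρ1 i1), mul_zero, zero_add]
      calc ENNReal.ofReal (g i) * rateI ρ φ i (∑ y, ρ i1 y * φ y)
          ≤ ENNReal.ofReal (g i) * rateI ρ φ i a :=
            mul_le_mul' le_rfl (rateI_right_mono ρ φ i (hρ0 i) (hρ1 i)
              (mean_mono_type ρ φ hρ1 hR hφ hii1) ha.le)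
        _ ≤ ENNReal.ofReal (g j) * rateI ρ φ j a
            + ENNReal.ofReal (g i) * rateI ρ φ i a := le_add_self
  apply le_antisymm
  · refine le_iInf fun i => le_iInf fun h => ?_
    refine iInf_le_of_le ⟨i, Nat.lt_of_succ_lt h⟩
      (iInf_le_of_le ⟨i + 1, h⟩ (iInf_le_of_le ?_ le_rfl))
    exact Fin.mk_lt_mk.2 (Nat.lt_succ_self i)
  · refine le_iInf fun i => le_iInf fun j => le_iInf fun hij => ?_
    have hij' : (i : ℕ) + 1 < M :=
      lt_of_le_of_lt (Nat.succ_le_of_lt (Fin.lt_def.1 hij)) j.isLt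
    refine le_trans (iInf_le_of_le (i : ℕ) (iInf_le_of_le hij' ?_)) (key i j hij)
    exact le_of_eq (by rw [Fin.eta])
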